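/- arXiv:math/0407490 — 12 statements merged into one kernel-verified Lean document; each statement's English description precedes it below -/
import Mathlib

section
/- For all ξ, η ∈ ℂ and r ∈ ℝ one has Φ(ξ,η,r) = Φ(ξ,η,0) + r·e₀(ξ), the vector Φ(ξ,η,0) is Euclidean-orthogonal to e₀(ξ), and e₀(ξ) has unit Euclidean norm. Consequently, for fixed (ξ,η) the map r ↦ Φ(ξ,η,r) is a unit-speed parametrization of the oriented affine line in ℝ³ with direction e₀(ξ) whose closest point to the origin is Φ(ξ,η,0). -/
open Complex ComplexConjugate

/-- The map `Φ : 𝕋 × ℝ → ℝ³ = ℂ × ℝ` sending a line `(ξ,η)` and parameter `r`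
to the point a distance `r` along the line. -/
noncomputable def Phi (ξ η : ℂ) (r : ℝ) : ℂ × ℝ :=
  ((2 * (η - conj η * ξ ^ 2) + 2 * ξ * (1 + normSq ξ) * (r : ℂ)) / (1 + normSq ξ) ^ 2,
   (-2 * (η * conj ξ + conj η * ξ).re + (1 - normSq ξ ^ 2) * r) / (1 + normSq ξ) ^ 2)

/-- The unit direction vector of the line with direction `ξ` (inverse stereographic
projection of `ξ`), as a vector in `ℝ³ = ℂ × ℝ`. -/
noncomputable def e0 (ξ : ℂ) : ℂ × ℝ :=
  (2 * ξ / (1 + normSq ξ), (1 - normSq ξ) / (1 + normSq ξ))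

/-- The Euclidean inner product on `ℝ³ = ℂ × ℝ`. -/
noncomputable def euclInner (p q : ℂ × ℝ) : ℝ :=
  (p.1 * conj q.1).re + p.2 * q.2

/-- `Φ(ξ,η,r) = Φ(ξ,η,0) + r·e₀(ξ)`, the vector `Φ(ξ,η,0)` is
Euclidean-orthogonal to `e₀(ξ)`, and `e₀(ξ)` is a unit vector. -/
theorem phi_line_param (ξ η : ℂ) (r : ℝ) :
    Phi ξ η r = Phi ξ η 0 + r • e0 ξ ∧
    euclInner (Phi ξ η 0) (e0 ξ) = 0 ∧
    euclInner (e0 ξ) (e0 ξ) = 1 := by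
  have h0 : (0:ℝ) < 1 + normSq ξ := add_pos_of_pos_of_nonneg one_pos (normSq_nonneg ξ)
  have h1 : (1 + normSq ξ : ℝ) ≠ 0 := h0.ne'
  have h1c : ((1:ℂ) + (normSq ξ : ℂ)) ≠ 0 := by
    intro h
    apply h1
    have := congrArg Complex.re h
    simpa using this
  refine ⟨?_, ?_, ?_⟩
  · simp only [Phi, e0, Prod.mk_add_mk, Prod.smul_mk, Prod.mk.injEq, smul_eq_mul,
      Complex.ofReal_zero, mul_zero, add_zero]
    constructor
    · rw [Complex.real_smul]
      field_simp
    · field_simp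
      ring
  · simp only [Phi, e0, euclInner, Complex.ofReal_zero, mul_zero, add_zero]
    have hconj : conj (2 * ξ / (1 + (normSq ξ : ℂ))) = 2 * conj ξ / (1 + (normSq ξ : ℂ)) := by
      simp [map_div₀, map_ofNat]
    rw [hconj]
    have hprod : 2 * (η - conj η * ξ ^ 2) / (1 + (normSq ξ : ℂ)) ^ 2 *
        (2 * conj ξ / (1 + (normSq ξ : ℂ)))
        = (2 * (η - conj η * ξ ^ 2) * (2 * conj ξ)) / (((1 + normSq ξ) ^ 3 : ℝ) : ℂ) := by
      rw [div_mul_div_comm]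
      push_cast
      congr 1
    rw [hprod, Complex.div_ofReal_re]
    have hkey : (2 * (η - conj η * ξ ^ 2) * (2 * conj ξ)) =
        4 * (η * conj ξ) - 4 * (normSq ξ : ℂ) * (conj η * ξ) := by
      linear_combination (-4 * conj η * ξ) * Complex.mul_conj ξ
    rw [hkey]
    simp only [Complex.sub_re, Complex.mul_re, Complex.add_re, Complex.ofReal_re,
      Complex.ofReal_im, Complex.mul_im, Complex.conj_re, Complex.conj_im,
      Complex.re_ofNat, Complex.im_ofNat]
    field_simp
    ring
  · simp only [e0, euclInner]
    have hconj : conj (2 * ξ / (1 + (normSq ξ : ℂ))) = 2 * conj ξ / (1 + (normSq ξ : ℂ)) := by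
      simp [map_div₀, map_ofNat]
    rw [hconj]
    have hprod : 2 * ξ / (1 + (normSq ξ : ℂ)) * (2 * conj ξ / (1 + (normSq ξ : ℂ)))
        = (((4 * normSq ξ) / (1 + normSq ξ) ^ 2 : ℝ) : ℂ) := by
      push_cast
      rw [div_mul_div_comm]
      congr 1
      · linear_combination 4 * Complex.mul_conj ξ
      · ring
    rw [hprod, Complex.ofReal_re]
    field_simp
    ring
end

section
/- For every (ξ,η) ∈ ℂ², the real quadratic form q_{(ξ,η)} on ℂ² ≅ ℝ⁴ has neutral signature (2,2): there exists an ℝ-linear isomorphism L : ℝ⁴ → ℂ² such that q_{(ξ,η)}(L(x)) = x₁² + x₂² − x₃² − x₄² for all x ∈ ℝ⁴. -/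
open Complex ComplexConjugate

/-- The neutral Kähler metric on the space `𝕋 ≅ ℂ²` of oriented lines, as a real
quadratic form on the tangent vector `(u,v)` at the point `(ξ,η)`. -/
noncomputable def q (ξ η : ℂ) (u v : ℂ) : ℝ :=
  -4 * (v * conj u).im / (1 + normSq ξ) ^ 2 -
    8 * (ξ * conj η).im * normSq u / (1 + normSq ξ) ^ 3

/-- Forward linear map diagonalizing the metric. -/
noncomputable def Fmap (b c : ℝ) : (Fin 4 → ℝ) →ₗ[ℝ] ℂ × ℂ where
  toFun x := (⟨x 0 + x 2, x 1 + x 3⟩,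
    ⟨((1 + b) * x 1 + (b - 1) * x 3) / c, (-(1 + b) * x 0 + (1 - b) * x 2) / c⟩)
  map_add' x y := by
    refine Prod.ext (Complex.ext ?_ ?_) (Complex.ext ?_ ?_) <;> simp <;> ring
  map_smul' r x := by
    refine Prod.ext (Complex.ext ?_ ?_) (Complex.ext ?_ ?_) <;> simp <;> ring

/-- Inverse linear map. -/
noncomputable def Gmap (b c : ℝ) : ℂ × ℂ →ₗ[ℝ] (Fin 4 → ℝ) where
  toFun p := ![((1 - b) * p.1.re - c * p.2.im) / 2, ((1 - b) * p.1.im + c * p.2.re) / 2,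
    ((1 + b) * p.1.re + c * p.2.im) / 2, ((1 + b) * p.1.im - c * p.2.re) / 2]
  map_add' p q := by
    funext i; fin_cases i <;> simp <;> ring
  map_smul' r p := by
    funext i; fin_cases i <;> simp <;> ring

/-- at every point `(ξ,η)`, the quadratic form `q_{(ξ,η)}` on
`ℂ² ≅ ℝ⁴` has neutral signature `(2,2)`: there is a real linear isomorphism
`L : ℝ⁴ → ℂ²` with `q(L x) = x₁² + x₂² − x₃² − x₄²`. -/
theorem metric_neutral_signature (ξ η : ℂ) :
    ∃ L : (Fin 4 → ℝ) ≃ₗ[ℝ] ℂ × ℂ,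
      ∀ x : Fin 4 → ℝ,
        q ξ η (L x).1 (L x).2 = x 0 ^ 2 + x 1 ^ 2 - x 2 ^ 2 - x 3 ^ 2 := by
  have hpos : (0 : ℝ) < 1 + normSq ξ := add_pos_of_pos_of_nonneg one_pos (normSq_nonneg ξ)
  have hne : (1 + normSq ξ) ≠ 0 := ne_of_gt hpos
  set b : ℝ := 8 * (ξ * conj η).im / (1 + normSq ξ) ^ 3 with hb
  set c : ℝ := 4 / (1 + normSq ξ) ^ 2 with hc
  have hcne : c ≠ 0 := ne_of_gt (by rw [hc]; exact div_pos four_pos (pow_pos hpos 2))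
  refine ⟨LinearEquiv.ofLinear (Fmap b c) (Gmap b c) ?_ ?_, ?_⟩
  · refine LinearMap.ext fun p => ?_
    simp only [LinearMap.comp_apply, Fmap, Gmap, LinearMap.coe_mk, AddHom.coe_mk,
      LinearMap.id_apply]
    refine Prod.ext (Complex.ext ?_ ?_) (Complex.ext ?_ ?_) <;>
      simp <;> field_simp [hcne] <;> ring
  · refine LinearMap.ext fun x => funext fun i => ?_
    fin_cases i <;>
      simp only [LinearMap.comp_apply, Fmap, Gmap, LinearMap.coe_mk, AddHom.coe_mk,
        LinearMap.id_apply] <;>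
      simp <;> field_simp [hcne] <;> ring
  · intro x
    simp only [LinearEquiv.ofLinear_apply, Fmap, LinearMap.coe_mk, AddHom.coe_mk]
    simp only [q, Complex.mul_im, Complex.conj_re, Complex.conj_im, Complex.normSq_mk]
    rw [hb, hc]
    simp only [Complex.mul_im, Complex.conj_re, Complex.conj_im]
    field_simp
    ring
end

section
/- Let θ, C₁, C₂, C₅ ∈ ℝ with C₂ ≠ 0, and let I ⊆ ℝ be an open interval on which cos(C₂s) ≠ 0. Then the curve ξ(s) = tan(C₂s)·e^{iθ}, η(s) = (C₅·sin(2C₂s) − i·C₁·s)/(4C₂·cos²(C₂s))·e^{iθ} satisfies the geodesic equations of the neutral Kähler metric on I: ξ'' − 2·conj(ξ)·(ξ')²/(1+|ξ|²) = 0 and η'' − 4·conj(ξ)·ξ'·η'/(1+|ξ|²) + 2·(conj(η)+conj(ξ)²·η)·(ξ')²/(1+|ξ|²)² = 0. -/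
open Complex ComplexConjugate

private lemma HasDerivAt.congr_d {f : ℝ → ℂ} {a b : ℂ} {x : ℝ}
    (h : HasDerivAt f a x) (e : a = b) : HasDerivAt f b x := e ▸ h

private lemma clear3 {x y w d1 d2 : ℂ} (h1 : d1 ≠ 0) (h2 : d2 ≠ 0)
    (h : x * (d1 * d2) - y * d2 + w * d1 = 0) : x - y / d1 + w / d2 = 0 := by
  have e : x - y / d1 + w / d2 = (x * (d1 * d2) - y * d2 + w * d1) / (d1 * d2) := by
    field_simp
  rw [e, h, zero_div]

private lemma tanDeriv (C₂ : ℝ) {x : ℝ} (h : Real.cos (C₂ * x) ≠ 0) :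
    HasDerivAt (fun s : ℝ => Real.tan (C₂ * s)) (C₂ * (1 + Real.tan (C₂ * x) ^ 2)) x := by
  have h1 : HasDerivAt (fun s : ℝ => C₂ * s) C₂ x := by
    simpa using (hasDerivAt_id x).const_mul C₂
  have h2 := (Real.hasDerivAt_tan h).comp x h1
  refine HasDerivAt.congr_deriv h2 ?_
  rw [one_div, ← Real.inv_one_add_tan_sq h, inv_inv]
  ring

private lemma eta_re (C₂ C₅ : ℝ) (hC₂ : C₂ ≠ 0) {x : ℝ} (h : Real.cos (C₂ * x) ≠ 0) :
    C₅ * Real.sin (2 * C₂ * x) / (4 * C₂ * Real.cos (C₂ * x) ^ 2)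
      = C₅ * Real.tan (C₂ * x) / (2 * C₂) := by
  rw [show 2 * C₂ * x = 2 * (C₂ * x) by ring, Real.sin_two_mul, Real.tan_eq_sin_div_cos]
  field_simp
  ring

private lemma eta_im (C₁ C₂ : ℝ) (hC₂ : C₂ ≠ 0) {x : ℝ} (h : Real.cos (C₂ * x) ≠ 0) :
    C₁ * x / (4 * C₂ * Real.cos (C₂ * x) ^ 2)
      = C₁ * x * (1 + Real.tan (C₂ * x) ^ 2) / (4 * C₂) := by
  have h1 : (0:ℝ) < 1 + Real.tan (C₂ * x) ^ 2 := by positivity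
  rw [← Real.inv_one_add_tan_sq h]
  field_simp

set_option maxHeartbeats 2000000

/-- the explicit curve `ξ(s) = tan(C₂s)·e^{iθ}`,
`η(s) = (C₅·sin(2C₂s) − i·C₁·s)/(4C₂·cos²(C₂s))·e^{iθ}` satisfies the geodesic
equations of the neutral Kähler metric on any open interval where `cos(C₂s) ≠ 0`. -/
theorem explicit_geodesic (θ C₁ C₂ C₅ : ℝ) (hC₂ : C₂ ≠ 0)
    (I : Set ℝ) (hIopen : IsOpen I) (hIconn : I.OrdConnected)
    (hcos : ∀ s ∈ I, Real.cos (C₂ * s) ≠ 0)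
    (ξ η : ℝ → ℂ)
    (hξ : ∀ s : ℝ, ξ s = (Real.tan (C₂ * s) : ℂ) * Complex.exp (θ * Complex.I))
    (hη : ∀ s : ℝ, η s =
      (((C₅ * Real.sin (2 * C₂ * s) : ℝ) : ℂ) - Complex.I * ((C₁ * s : ℝ) : ℂ)) /
        ((4 * C₂ * Real.cos (C₂ * s) ^ 2 : ℝ) : ℂ) * Complex.exp (θ * Complex.I)) :
    ∀ s ∈ I,
      deriv (deriv ξ) s - 2 * conj (ξ s) * (deriv ξ s) ^ 2 / (1 + normSq (ξ s)) = 0 ∧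
      deriv (deriv η) s - 4 * conj (ξ s) * deriv ξ s * deriv η s / (1 + normSq (ξ s)) +
        2 * (conj (η s) + conj (ξ s) ^ 2 * η s) * (deriv ξ s) ^ 2 /
          (1 + normSq (ξ s)) ^ 2 = 0 := by
  intro s hs
  set z : ℂ := Complex.exp (θ * Complex.I) with hz
  have hzero : z ≠ 0 := Complex.exp_ne_zero _
  have hzconj : conj z = z⁻¹ := by
    apply eq_inv_of_mul_eq_one_left
    rw [mul_comm, Complex.mul_conj]
    norm_cast
    rw [Complex.normSq_eq_norm_sq, Complex.norm_exp_ofReal_mul_I]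
    norm_num
  set U : Set ℝ := {x | Real.cos (C₂ * x) ≠ 0} with hU
  have hUopen : IsOpen U := by
    have : U = (fun x => Real.cos (C₂ * x)) ⁻¹' {0}ᶜ := rfl
    rw [this]
    exact (isOpen_compl_singleton).preimage
      (Real.continuous_cos.comp (continuous_const.mul continuous_id))
  have hsU : s ∈ U := hcos s hs
  -- first derivatives
  set ξ1 : ℝ → ℂ := fun x => ((C₂ * (1 + Real.tan (C₂ * x) ^ 2) : ℝ) : ℂ) * z with hξ1def
  set g : ℝ → ℂ := fun x =>
    (((C₅ * Real.tan (C₂ * x) / (2 * C₂) : ℝ) : ℂ)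
      - Complex.I * ((C₁ * x * (1 + Real.tan (C₂ * x) ^ 2) / (4 * C₂) : ℝ) : ℂ)) * z with hgdef
  set g1 : ℝ → ℂ := fun x =>
    (((C₅ * (1 + Real.tan (C₂ * x) ^ 2) / 2 : ℝ) : ℂ)
      - Complex.I * ((C₁ * (1 + Real.tan (C₂ * x) ^ 2) * (1 + 2 * C₂ * x * Real.tan (C₂ * x)) / (4 * C₂) : ℝ) : ℂ)) * z
    with hg1def
  have hηg : ∀ x ∈ U, η x = g x := by
    intro x hx
    rw [hη, hgdef]
    congr 1
    rw [sub_div, ← Complex.ofReal_div, eta_re C₂ C₅ hC₂ hx, ← eta_im C₁ C₂ hC₂ hx]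
    push_cast
    ring
  have Hξ : ∀ x ∈ U, HasDerivAt ξ (ξ1 x) x := by
    intro x hx
    have hfe : ξ = fun y => ((Real.tan (C₂ * y) : ℝ) : ℂ) * z := funext hξ
    rw [hfe]
    exact ((tanDeriv C₂ hx).ofReal_comp).mul_const z
  have Hξ1 : ∀ x ∈ U,
      HasDerivAt ξ1 (((2 * C₂ ^ 2 * Real.tan (C₂ * x) * (1 + Real.tan (C₂ * x) ^ 2) : ℝ) : ℂ) * z) x := by
    intro x hx
    have h2 : HasDerivAt (fun y => C₂ * (1 + Real.tan (C₂ * y) ^ 2))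
        (C₂ * ((2 : ℕ) * Real.tan (C₂ * x) ^ 1 * (C₂ * (1 + Real.tan (C₂ * x) ^ 2)))) x :=
      (((tanDeriv C₂ hx).pow 2).const_add 1).const_mul C₂
    exact ((h2.ofReal_comp).mul_const z).congr_d (by push_cast; ring)
  have Hg : ∀ x ∈ U, HasDerivAt g (g1 x) x := by
    intro x hx
    have hp : HasDerivAt (fun y => C₅ * Real.tan (C₂ * y) / (2 * C₂))
        (C₅ * (C₂ * (1 + Real.tan (C₂ * x) ^ 2)) / (2 * C₂)) x :=
      ((tanDeriv C₂ hx).const_mul C₅).div_const (2 * C₂)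
    have hq : HasDerivAt (fun y => C₁ * y * (1 + Real.tan (C₂ * y) ^ 2) / (4 * C₂))
        ((C₁ * (1 + Real.tan (C₂ * x) ^ 2) + (C₁ * x) * ((2 : ℕ) * Real.tan (C₂ * x) ^ 1 * (C₂ * (1 + Real.tan (C₂ * x) ^ 2))))
          / (4 * C₂)) x := by
      have h1 : HasDerivAt (fun y : ℝ => C₁ * y) C₁ x := by
        simpa using (hasDerivAt_id x).const_mul C₁
      exact (h1.mul (((tanDeriv C₂ hx).pow 2).const_add 1)).div_const (4 * C₂)
    refine (((hp.ofReal_comp).sub ((hq.ofReal_comp).const_mul Complex.I)).mul_const z).congr_d ?_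
    rw [hg1def]
    push_cast
    have hC₂c : (C₂ : ℂ) ≠ 0 := Complex.ofReal_ne_zero.2 hC₂
    field_simp
  have Hg1 : ∀ x ∈ U, HasDerivAt g1
      ((((C₅ * C₂ * Real.tan (C₂ * x) * (1 + Real.tan (C₂ * x) ^ 2) : ℝ) : ℂ)
        - Complex.I * ((C₁ * (1 + Real.tan (C₂ * x) ^ 2)
            * (Real.tan (C₂ * x) * (1 + 2 * C₂ * x * Real.tan (C₂ * x)) + Real.tan (C₂ * x) + C₂ * x * (1 + Real.tan (C₂ * x) ^ 2)) / 2 : ℝ) : ℂ)) * z) x := by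
    intro x hx
    have hp2 : HasDerivAt (fun y => C₅ * (1 + Real.tan (C₂ * y) ^ 2) / 2)
        (C₅ * ((2 : ℕ) * Real.tan (C₂ * x) ^ 1 * (C₂ * (1 + Real.tan (C₂ * x) ^ 2))) / 2) x :=
      ((((tanDeriv C₂ hx).pow 2).const_add 1).const_mul C₅).div_const 2
    have ha : HasDerivAt (fun y => 1 + Real.tan (C₂ * y) ^ 2) ((2 : ℕ) * Real.tan (C₂ * x) ^ 1 * (C₂ * (1 + Real.tan (C₂ * x) ^ 2))) x :=
      ((tanDeriv C₂ hx).pow 2).const_add 1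
    have hb : HasDerivAt (fun y => 1 + 2 * C₂ * y * Real.tan (C₂ * y))
        ((2 * C₂) * Real.tan (C₂ * x) + (2 * C₂ * x) * (C₂ * (1 + Real.tan (C₂ * x) ^ 2))) x := by
      have h1 : HasDerivAt (fun y : ℝ => 2 * C₂ * y) (2 * C₂) x := by
        simpa using (hasDerivAt_id x).const_mul (2 * C₂)
      exact ((h1.mul (tanDeriv C₂ hx)).const_add 1)
    have hq2 : HasDerivAt (fun y => C₁ * (1 + Real.tan (C₂ * y) ^ 2) * (1 + 2 * C₂ * y * Real.tan (C₂ * y)) / (4 * C₂))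
        ((C₁ * ((2 : ℕ) * Real.tan (C₂ * x) ^ 1 * (C₂ * (1 + Real.tan (C₂ * x) ^ 2))) * (1 + 2 * C₂ * x * Real.tan (C₂ * x))
          + C₁ * (1 + Real.tan (C₂ * x) ^ 2) * ((2 * C₂) * Real.tan (C₂ * x) + (2 * C₂ * x) * (C₂ * (1 + Real.tan (C₂ * x) ^ 2))))
          / (4 * C₂)) x :=
      ((ha.const_mul C₁).mul hb).div_const (4 * C₂)
    refine (((hp2.ofReal_comp).sub ((hq2.ofReal_comp).const_mul Complex.I)).mul_const z).congr_d ?_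
    push_cast
    have hC₂c : (C₂ : ℂ) ≠ 0 := Complex.ofReal_ne_zero.2 hC₂
    field_simp
    ring
  -- deriv identifications
  have hdξ : deriv ξ s = ξ1 s := (Hξ s hsU).deriv
  have hddξ : deriv (deriv ξ) s = ((2 * C₂ ^ 2 * Real.tan (C₂ * s) * (1 + Real.tan (C₂ * s) ^ 2) : ℝ) : ℂ) * z := by
    have hev : deriv ξ =ᶠ[nhds s] ξ1 :=
      Filter.eventuallyEq_of_mem (hUopen.mem_nhds hsU) (fun x hx => (Hξ x hx).deriv)
    rw [hev.deriv_eq]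
    exact (Hξ1 s hsU).deriv
  have Hη : ∀ x ∈ U, HasDerivAt η (g1 x) x := by
    intro x hx
    exact (Hg x hx).congr_of_eventuallyEq
      (Filter.eventuallyEq_of_mem (hUopen.mem_nhds hx) hηg)
  have hdη : deriv η s = g1 s := (Hη s hsU).deriv
  have hddη : deriv (deriv η) s =
      (((C₅ * C₂ * Real.tan (C₂ * s) * (1 + Real.tan (C₂ * s) ^ 2) : ℝ) : ℂ)
        - Complex.I * ((C₁ * (1 + Real.tan (C₂ * s) ^ 2)
            * (Real.tan (C₂ * s) * (1 + 2 * C₂ * s * Real.tan (C₂ * s)) + Real.tan (C₂ * s) + C₂ * s * (1 + Real.tan (C₂ * s) ^ 2)) / 2 : ℝ) : ℂ)) * z := by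
    have hev : deriv η =ᶠ[nhds s] g1 :=
      Filter.eventuallyEq_of_mem (hUopen.mem_nhds hsU) (fun x hx => (Hη x hx).deriv)
    rw [hev.deriv_eq]
    exact (Hg1 s hsU).deriv
  have hns : Complex.normSq (ξ s) = Real.tan (C₂ * s) ^ 2 := by
    rw [hξ]
    rw [Complex.normSq_mul, Complex.normSq_eq_norm_sq z, Complex.norm_exp_ofReal_mul_I,
      Complex.normSq_ofReal]
    ring
  have h1t : (1 : ℂ) + Complex.tan ((C₂ : ℂ) * (s : ℂ)) ^ 2 ≠ 0 := by
    have h0 : ((1 + Real.tan (C₂ * s) ^ 2 : ℝ) : ℂ) ≠ 0 :=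
      Complex.ofReal_ne_zero.2 (by positivity)
    push_cast at h0
    exact h0
  have hC₂c : (C₂ : ℂ) ≠ 0 := Complex.ofReal_ne_zero.2 hC₂
  rw [hddξ, hddη, hdξ, hdη, hns, hηg s hsU, hξ s]
  simp only [hξ1def, hgdef, hg1def]
  simp only [map_mul, map_sub, Complex.conj_ofReal, Complex.conj_I, hzconj]
  constructor
  · push_cast
    field_simp [h1t, hzero, hC₂c]
    ring
  · push_cast
    field_simp [h1t, hzero, hC₂c]
    ring
end

section
/- Let I ⊆ ℝ be an open interval and (ξ,η) : I → ℂ² a twice continuously differentiable curve satisfying the geodesic equations of the neutral Kähler metric. Then the function E(s) = (2i/(1+|ξ(s)|²)²)·(η'(s)·conj(ξ'(s)) − conj(η'(s))·ξ'(s) + 2·(ξ(s)·conj(η(s)) − conj(ξ(s))·η(s))·|ξ'(s)|²/(1+|ξ(s)|²)) is real-valued and constant on I. -/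
set_option maxHeartbeats 2000000


open Complex ComplexConjugate

private lemma HasDerivAt.conjC {f : ℝ → ℂ} {f' : ℂ} {x : ℝ} (h : HasDerivAt f f' x) :
    HasDerivAt (fun t => conj (f t)) (conj f') x := by
  simpa only [Complex.star_def] using h.star

/-- along any `C²` solution of the geodesic equations of the neutral
Kähler metric on an open interval, the `G`-norm of the tangent vector
`E(s) = (2i/(1+|ξ|²)²)·(η'·conj(ξ') − conj(η')·ξ' + 2(ξ·conj(η) − conj(ξ)·η)|ξ'|²/(1+|ξ|²))`
is real-valued and constant. -/
theorem geodesic_first_integral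
    (I : Set ℝ) (hIopen : IsOpen I) (hIconn : I.OrdConnected)
    (ξ η : ℝ → ℂ)
    (hξ : ContDiffOn ℝ 2 ξ I) (hη : ContDiffOn ℝ 2 η I)
    (hgeo : ∀ s ∈ I,
      deriv (deriv ξ) s - 2 * conj (ξ s) * (deriv ξ s) ^ 2 / (1 + normSq (ξ s)) = 0 ∧
      deriv (deriv η) s - 4 * conj (ξ s) * deriv ξ s * deriv η s / (1 + normSq (ξ s)) +
        2 * (conj (η s) + conj (ξ s) ^ 2 * η s) * (deriv ξ s) ^ 2 /
          (1 + normSq (ξ s)) ^ 2 = 0)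
    (E : ℝ → ℂ)
    (hE : ∀ s : ℝ, E s = (2 * Complex.I / (1 + normSq (ξ s)) ^ 2) *
      (deriv η s * conj (deriv ξ s) - conj (deriv η s) * deriv ξ s +
        2 * (ξ s * conj (η s) - conj (ξ s) * η s) * normSq (deriv ξ s) /
          (1 + normSq (ξ s)))) :
    (∀ s ∈ I, (E s).im = 0) ∧ (∀ s ∈ I, ∀ t ∈ I, E s = E t) := by
  -- real-valuedness
  have hreal : ∀ s : ℝ, (E s).im = 0 := by
    intro s
    rw [← Complex.conj_eq_iff_im, hE s]
    simp only [map_mul, map_div₀, map_sub, map_add, map_one, map_ofNat, map_pow,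
      Complex.conj_I, Complex.conj_conj, Complex.conj_ofReal]
    ring
  refine ⟨fun s _ => hreal s, ?_⟩
  -- rewrite E without `normSq`
  have hEf : ∀ s : ℝ, E s = (2 * Complex.I / (1 + ξ s * conj (ξ s)) ^ 2) *
      (deriv η s * conj (deriv ξ s) - conj (deriv η s) * deriv ξ s +
        2 * (ξ s * conj (η s) - conj (ξ s) * η s) * (deriv ξ s * conj (deriv ξ s)) /
          (1 + ξ s * conj (ξ s))) := by
    intro s
    rw [hE s, Complex.mul_conj, Complex.mul_conj]
  -- differentiability data
  have hξd : ∀ s ∈ I, HasDerivAt ξ (deriv ξ s) s := fun s hs =>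
    ((hξ.differentiableOn (by norm_num)).differentiableAt (hIopen.mem_nhds hs)).hasDerivAt
  have hηd : ∀ s ∈ I, HasDerivAt η (deriv η s) s := fun s hs =>
    ((hη.differentiableOn (by norm_num)).differentiableAt (hIopen.mem_nhds hs)).hasDerivAt
  have hξ1 : ContDiffOn ℝ 1 (deriv ξ) I := hξ.deriv_of_isOpen hIopen (by norm_num)
  have hη1 : ContDiffOn ℝ 1 (deriv η) I := hη.deriv_of_isOpen hIopen (by norm_num)
  have hξd2 : ∀ s ∈ I, HasDerivAt (deriv ξ) (deriv (deriv ξ) s) s := fun s hs =>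
    ((hξ1.differentiableOn (by norm_num)).differentiableAt (hIopen.mem_nhds hs)).hasDerivAt
  have hηd2 : ∀ s ∈ I, HasDerivAt (deriv η) (deriv (deriv η) s) s := fun s hs =>
    ((hη1.differentiableOn (by norm_num)).differentiableAt (hIopen.mem_nhds hs)).hasDerivAt
  -- E has zero derivative on I
  have hE0 : ∀ s ∈ I, HasDerivAt E 0 s := by
    intro s hs
    set u := ξ s with hu_def
    set v := η s with hv_def
    set A := deriv ξ s with hA_def
    set B := deriv η s with hB_def
    set A2 := deriv (deriv ξ) s with hA2_def
    set B2 := deriv (deriv η) s with hB2_def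
    have hrR : (0:ℝ) < 1 + normSq u := by
      have := normSq_nonneg u; linarith
    have hrC : (1 : ℂ) + u * conj u ≠ 0 := by
      rw [Complex.mul_conj]
      intro h
      have h2 : ((1 + normSq u : ℝ) : ℂ) = 0 := by push_cast; exact h
      exact (ne_of_gt hrR) (Complex.ofReal_eq_zero.mp h2)
    have hrC' : (1 : ℂ) + (normSq u : ℂ) ≠ 0 := by
      rwa [Complex.mul_conj] at hrC
    -- geodesic equations solved for second derivatives
    obtain ⟨g1, g2⟩ := hgeo s hs
    have hA2eq : A2 = 2 * conj u * A ^ 2 / (1 + u * conj u) := by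
      rw [Complex.mul_conj]
      exact sub_eq_zero.mp g1
    have hB2eq : B2 = 4 * conj u * A * B / (1 + u * conj u) -
        2 * (conj v + conj u ^ 2 * v) * A ^ 2 / (1 + u * conj u) ^ 2 := by
      rw [Complex.mul_conj]
      linear_combination g2
    have hA2c : conj A2 = 2 * u * conj A ^ 2 / (1 + u * conj u) := by
      rw [hA2eq]
      simp only [map_div₀, map_mul, map_add, map_one, map_ofNat, map_pow, Complex.conj_conj]
      ring_nf
    have hB2c : conj B2 = 4 * u * conj A * conj B / (1 + u * conj u) -
        2 * (v + u ^ 2 * conj v) * conj A ^ 2 / (1 + u * conj u) ^ 2 := by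
      rw [hB2eq]
      simp only [map_sub, map_div₀, map_mul, map_add, map_one, map_ofNat, map_pow,
        Complex.conj_conj]
      ring_nf
    -- derivatives of the pieces
    have hu : HasDerivAt ξ A s := hξd s hs
    have hv : HasDerivAt η B s := hηd s hs
    have hAder : HasDerivAt (deriv ξ) A2 s := hξd2 s hs
    have hBder : HasDerivAt (deriv η) B2 s := hηd2 s hs
    have huc : HasDerivAt (fun t => conj (ξ t)) (conj A) s := hu.conjC
    have hvc : HasDerivAt (fun t => conj (η t)) (conj B) s := hv.conjC
    have hAc : HasDerivAt (fun t => conj (deriv ξ t)) (conj A2) s := hAder.conjC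
    have hBc : HasDerivAt (fun t => conj (deriv η t)) (conj B2) s := hBder.conjC
    have hr : HasDerivAt (fun t => 1 + ξ t * conj (ξ t)) (A * conj u + u * conj A) s :=
      (hu.mul huc).const_add 1
    have hden : HasDerivAt (fun t => (1 + ξ t * conj (ξ t)) ^ 2)
        ((A * conj u + u * conj A) * (1 + u * conj u) +
          (1 + u * conj u) * (A * conj u + u * conj A)) s := by
      exact (hr.mul hr).congr_of_eventuallyEq (Filter.Eventually.of_forall fun t => pow_two _)
    have hfront := (hasDerivAt_const s (2 * Complex.I)).div hden (pow_ne_zero 2 hrC)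
    have h1 : HasDerivAt (fun t => deriv η t * conj (deriv ξ t))
        (B2 * conj A + B * conj A2) s := hBder.mul hAc
    have h2 : HasDerivAt (fun t => conj (deriv η t) * deriv ξ t)
        (conj B2 * A + conj B * A2) s := hBc.mul hAder
    have h4 : HasDerivAt (fun t => 2 * (ξ t * conj (η t) - conj (ξ t) * η t))
        (2 * ((A * conj v + u * conj B) - (conj A * v + conj u * B))) s :=
      ((hu.mul hvc).sub (huc.mul hv)).const_mul 2
    have h5 : HasDerivAt (fun t => deriv ξ t * conj (deriv ξ t))
        (A2 * conj A + A * conj A2) s := hAder.mul hAc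
    have h7 := (h4.mul h5).div hr hrC
    have hmain := hfront.mul ((h1.sub h2).add h7)
    have hEeq := hmain.congr_of_eventuallyEq (Filter.Eventually.of_forall fun t => hEf t)
    have h0 : HasDerivAt E 0 s := by
      refine hEeq.congr_deriv (Eq.symm ?_)
      beta_reduce
      simp only [Pi.mul_apply, Pi.div_apply, Pi.sub_apply, Pi.add_apply, ← hA2_def, ← hB2_def, ← hA_def, ← hB_def, ← hu_def, ← hv_def]
      rw [hA2c, hB2c, hA2eq, hB2eq]
      symm
      field_simp
      have hc : ∀ n : ℕ, (1 + u * conj u) ^ n ≠ 0 := fun n => pow_ne_zero n hrC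
      ring
    exact h0
  -- constancy
  intro s hs t ht
  have hconv : Convex ℝ I := convex_iff_ordConnected.mpr hIconn
  refine hconv.is_const_of_fderivWithin_eq_zero (𝕜 := ℝ)
    (fun x hx => ((hE0 x hx).differentiableAt.differentiableWithinAt)) ?_ hs ht
  intro x hx
  rw [fderivWithin_of_isOpen hIopen hx, (hE0 x hx).hasFDerivAt.fderiv]
  ext
  simp
end

section
/- Let θ, C₁, C₂, C₃ ∈ ℝ with C₂ ≠ 0, let I be an open interval on which cos(C₂s) ≠ 0, set ξ(s) = tan(C₂s)·e^{iθ}, and let η : I → ℂ be twice continuously differentiable, satisfying the η-geodesic equation η'' − 4·conj(ξ)·ξ'·η'/(1+|ξ|²) + 2·(conj(η)+conj(ξ)²·η)·(ξ')²/(1+|ξ|²)² = 0 together with the constraint η(s)·e^{−iθ} − conj(η(s))·e^{iθ} = (C₁s+C₃)/(2i·C₂·cos²(C₂s)) for all s ∈ I. Then u(s) := cos²(C₂s)·η(s) satisfies the forced harmonic oscillator equation u'' + 4C₂²·u = −C₂·(C₁s+C₃)·i·e^{iθ} on I. -/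
open Complex ComplexConjugate

/-- along the great-circle solution `ξ(s) = tan(C₂s)e^{iθ}`, if `η`
satisfies the `η`-geodesic equation together with the first-integral constraint
`η·e^{−iθ} − conj(η)·e^{iθ} = (C₁s+C₃)/(2i·C₂·cos²(C₂s))`, then
`u(s) = cos²(C₂s)·η(s)` satisfies the forced harmonic oscillator equation
`u'' + 4C₂²·u = −C₂(C₁s+C₃)·i·e^{iθ}`. -/
theorem eta_equation_is_forced_oscillator (θ C₁ C₂ C₃ : ℝ) (hC₂ : C₂ ≠ 0)
    (I : Set ℝ) (hIopen : IsOpen I) (hIconn : I.OrdConnected)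
    (hcos : ∀ s ∈ I, Real.cos (C₂ * s) ≠ 0)
    (ξ : ℝ → ℂ)
    (hξ : ∀ s : ℝ, ξ s = (Real.tan (C₂ * s) : ℂ) * Complex.exp (θ * Complex.I))
    (η : ℝ → ℂ) (hη : ContDiffOn ℝ 2 η I)
    (hgeo : ∀ s ∈ I,
      deriv (deriv η) s - 4 * conj (ξ s) * deriv ξ s * deriv η s / (1 + normSq (ξ s)) +
        2 * (conj (η s) + conj (ξ s) ^ 2 * η s) * (deriv ξ s) ^ 2 /
          (1 + normSq (ξ s)) ^ 2 = 0)
    (hconstraint : ∀ s ∈ I,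
      η s * Complex.exp (-(θ * Complex.I)) - conj (η s) * Complex.exp (θ * Complex.I) =
        ((C₁ * s + C₃ : ℝ) : ℂ) / (2 * Complex.I * C₂ * Real.cos (C₂ * s) ^ 2))
    (u : ℝ → ℂ)
    (hu : ∀ s : ℝ, u s = ((Real.cos (C₂ * s) ^ 2 : ℝ) : ℂ) * η s) :
    ∀ s ∈ I, deriv (deriv u) s + 4 * C₂ ^ 2 * u s =
      -C₂ * ((C₁ * s + C₃ : ℝ) : ℂ) * Complex.I * Complex.exp (θ * Complex.I) := by
  intro s hs
  -- differentiability facts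
  have hη1 : ∀ t ∈ I, HasDerivAt η (deriv η t) t := fun t ht =>
    ((hη.differentiableOn (by norm_num)).differentiableAt (hIopen.mem_nhds ht)).hasDerivAt
  have hηd : ContDiffOn ℝ 1 (deriv η) I := by
    have := hη.deriv_of_isOpen (m := 1) hIopen (by norm_num)
    exact this
  have hη2 : ∀ t ∈ I, HasDerivAt (deriv η) (deriv (deriv η) t) t := fun t ht =>
    ((hηd.differentiableOn (by norm_num)).differentiableAt (hIopen.mem_nhds ht)).hasDerivAt
  -- basic derivative of t ↦ C₂ t
  have hlin : ∀ t : ℝ, HasDerivAt (fun x : ℝ => C₂ * x) C₂ t := fun t => by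
    simpa using (hasDerivAt_id t).const_mul C₂
  have hcosd : ∀ t : ℝ, HasDerivAt (fun x : ℝ => (Real.cos (C₂ * x) : ℂ))
      (↑(-Real.sin (C₂ * t) * C₂)) t := fun t => ((hlin t).cos).ofReal_comp
  -- first derivative of u on I
  have hu' : u = fun t => (Real.cos (C₂ * t) : ℂ) * (Real.cos (C₂ * t) : ℂ) * η t := by
    funext t; rw [hu]; push_cast; ring
  have huder : ∀ t ∈ I, HasDerivAt u
      ((-2 * C₂ * (Real.cos (C₂ * t) : ℂ) * (Real.sin (C₂ * t) : ℂ)) * η t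
        + (Real.cos (C₂ * t) : ℂ) * (Real.cos (C₂ * t) : ℂ) * deriv η t) t := by
    intro t ht
    rw [hu']
    have h := (((hcosd t).mul (hcosd t)).mul (hη1 t ht))
    exact h.congr_deriv (by push_cast; simp only [Pi.mul_apply]; ring)
  set D : ℝ → ℂ := fun t =>
      (-2 * C₂ * (Real.cos (C₂ * t) : ℂ) * (Real.sin (C₂ * t) : ℂ)) * η t
        + (Real.cos (C₂ * t) : ℂ) * (Real.cos (C₂ * t) : ℂ) * deriv η t with hD
  have hduD : deriv u =ᶠ[nhds s] D :=
    Filter.eventuallyEq_of_mem (hIopen.mem_nhds hs) fun t ht => (huder t ht).deriv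
  -- second derivative of u at s
  have hsind : ∀ t : ℝ, HasDerivAt (fun x : ℝ => (Real.sin (C₂ * x) : ℂ))
      (↑(Real.cos (C₂ * t) * C₂)) t := fun t => ((hlin t).sin).ofReal_comp
  have hDder : HasDerivAt D
      ((-2 * C₂ ^ 2 * ((Real.cos (C₂ * s) : ℂ) ^ 2 - (Real.sin (C₂ * s) : ℂ) ^ 2)) * η s
        + (-4 * C₂ * (Real.cos (C₂ * s) : ℂ) * (Real.sin (C₂ * s) : ℂ)) * deriv η s
        + (Real.cos (C₂ * s) : ℂ) * (Real.cos (C₂ * s) : ℂ) * deriv (deriv η) s) s := by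
    have h1 : HasDerivAt (fun t => (-2 * C₂ * (Real.cos (C₂ * t) : ℂ) * (Real.sin (C₂ * t) : ℂ)) * η t)
        (((-2 * C₂ * ((↑(-Real.sin (C₂ * s) * C₂) : ℂ) * (Real.sin (C₂ * s) : ℂ)
            + (Real.cos (C₂ * s) : ℂ) * (↑(Real.cos (C₂ * s) * C₂) : ℂ)))) * η s
          + (-2 * C₂ * (Real.cos (C₂ * s) : ℂ) * (Real.sin (C₂ * s) : ℂ)) * deriv η s) s := by
      have := (((hcosd s).mul (hsind s)).const_mul ((-2 : ℂ) * ↑C₂)).mul (hη1 s hs)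
      refine (this.congr_deriv ?_).congr_of_eventuallyEq (Filter.Eventually.of_forall fun t => ?_)
      · push_cast; simp only [Pi.mul_apply]; ring
      · simp only [Pi.mul_apply]; ring
    have h2 := ((hcosd s).mul (hcosd s)).mul (hη2 s hs)
    have h := h1.add h2
    exact h.congr_deriv (by push_cast; simp only [Pi.mul_apply]; ring)
  have hdd : deriv (deriv u) s =
      (-2 * C₂ ^ 2 * ((Real.cos (C₂ * s) : ℂ) ^ 2 - (Real.sin (C₂ * s) : ℂ) ^ 2)) * η s
        + (-4 * C₂ * (Real.cos (C₂ * s) : ℂ) * (Real.sin (C₂ * s) : ℂ)) * deriv η s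
        + (Real.cos (C₂ * s) : ℂ) * (Real.cos (C₂ * s) : ℂ) * deriv (deriv η) s := by
    rw [hduD.deriv_eq]; exact hDder.deriv
  -- facts about ξ
  have hcs : Real.cos (C₂ * s) ≠ 0 := hcos s hs
  have hcsC : (Real.cos (C₂ * s) : ℂ) ≠ 0 := by exact_mod_cast hcs
  have hE : Complex.exp (θ * Complex.I) ≠ 0 := Complex.exp_ne_zero _
  have hξder : HasDerivAt ξ (((1 / Real.cos (C₂ * s) ^ 2 * C₂ : ℝ) : ℂ) * Complex.exp (θ * Complex.I)) s := by
    have hfun : ξ = fun t => ((Real.tan (C₂ * t) : ℝ) : ℂ) * Complex.exp (θ * Complex.I) :=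
      funext hξ
    rw [hfun]
    exact (((Real.hasDerivAt_tan hcs).comp s (hlin s)).ofReal_comp).mul_const _
  have hξd : deriv ξ s = ((1 / Real.cos (C₂ * s) ^ 2 * C₂ : ℝ) : ℂ) * Complex.exp (θ * Complex.I) :=
    hξder.deriv
  have hconjξ : conj (ξ s) = (Real.tan (C₂ * s) : ℂ) * (Complex.exp (θ * Complex.I))⁻¹ := by
    rw [hξ, map_mul, Complex.conj_ofReal, ← Complex.exp_conj, ← Complex.exp_neg]
    congr 1
    simp
  have hns : (normSq (ξ s) : ℂ) = (Real.tan (C₂ * s) : ℂ) ^ 2 := by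
    have h2 : normSq (Complex.exp (θ * Complex.I)) = 1 := by
      rw [Complex.normSq_eq_norm_sq, Complex.norm_exp_ofReal_mul_I]; norm_num
    rw [hξ, Complex.normSq_mul, h2, Complex.normSq_ofReal, mul_one]
    exact_mod_cast (sq (Real.tan (C₂ * s))).symm
  have htan : (Real.tan (C₂ * s) : ℂ) = (Real.sin (C₂ * s) : ℂ) / (Real.cos (C₂ * s) : ℂ) := by
    rw [Real.tan_eq_sin_div_cos]; push_cast; ring
  have hpyth : (Real.sin (C₂ * s) : ℂ) ^ 2 + (Real.cos (C₂ * s) : ℂ) ^ 2 = 1 := by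
    rw [← Complex.ofReal_pow, ← Complex.ofReal_pow, ← Complex.ofReal_add,
      Real.sin_sq_add_cos_sq, Complex.ofReal_one]
  -- clean up geodesic equation
  have hg := hgeo s hs
  rw [hξd, hconjξ, hns, htan] at hg
  have hcon := hconstraint s hs
  rw [Complex.exp_neg] at hcon
  have hC₂C : (C₂ : ℂ) ≠ 0 := by exact_mod_cast hC₂
  have hden : (1 : ℂ) + ((Real.sin (C₂ * s) : ℂ) / (Real.cos (C₂ * s) : ℂ)) ^ 2
        = 1 / (Real.cos (C₂ * s) : ℂ) ^ 2 := by
    rw [div_pow, eq_div_iff (pow_ne_zero 2 hcsC), add_mul, one_mul,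
      div_mul_cancel₀ _ (pow_ne_zero 2 hcsC)]
    linear_combination hpyth
  have hIne : Complex.I ≠ 0 := Complex.I_ne_zero
  have hcsC' : Complex.cos (↑C₂ * ↑s) ≠ 0 := by
    rw [show ((C₂ : ℂ) * (s : ℂ)) = ((C₂ * s : ℝ) : ℂ) by push_cast; ring, ← Complex.ofReal_cos]
    exact_mod_cast hcs
  rw [hden] at hg
  push_cast at hg hcon
  field_simp [hE, hcsC'] at hg hcon
  rw [hdd, hu, Complex.ofReal_pow]
  push_cast
  set c : ℂ := Complex.cos (↑C₂ * ↑s) with hc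
  set S : ℂ := Complex.sin (↑C₂ * ↑s) with hS
  set E : ℂ := Complex.exp (↑θ * Complex.I) with hEdef
  have hg2 : deriv (deriv η) s * c ^ 2 - 4 * ↑C₂ * S * c * deriv η s
      + 2 * ↑C₂ ^ 2 * c ^ 2 * E ^ 2 * conj (η s) + 2 * ↑C₂ ^ 2 * S ^ 2 * η s = 0 := by
    have hne : E ^ 3 * c ^ 7 ≠ 0 := mul_ne_zero (pow_ne_zero 3 hE) (pow_ne_zero 7 hcsC')
    apply mul_left_cancel₀ hne
    rw [mul_zero]
    linear_combination (E ^ 3 * c ^ 7) * hg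
  linear_combination hg2 + (-(C₂ : ℂ) * Complex.I) * hcon
    + (2 * (C₂ : ℂ) ^ 2 * c ^ 2 * (η s - E ^ 2 * conj (η s))) * Complex.I_sq
end

section
/- Let C₁, C₂ ∈ ℝ with C₂ ≠ 0. For every s ∈ ℝ with cos(C₂s) ≠ 0 and every r ∈ ℝ, Φ(tan(C₂s), −i·C₁·s/(4C₂·cos²(C₂s)), r) = (r·sin(2C₂s) − i·C₁·s/(2C₂), r·cos(2C₂s)) ∈ ℂ×ℝ. (Thus the ruled surface swept out by the non-null geodesic in standard position is the helicoid x¹ = r·sin(2C₂s), x² = −C₁s/(2C₂), x³ = r·cos(2C₂s) when C₁ ≠ 0, and a plane when C₁ = 0.) -/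
open Complex ComplexConjugate

/-- the ruled surface swept out by the non-null geodesic in standard
position `ξ(s) = tan(C₂s)`, `η(s) = −i·C₁·s/(4C₂·cos²(C₂s))` is the helicoid
`x¹ = r·sin(2C₂s)`, `x² = −C₁s/(2C₂)`, `x³ = r·cos(2C₂s)` (a plane when `C₁ = 0`). -/
theorem geodesic_ruled_surface_is_helicoid (C₁ C₂ : ℝ) (hC₂ : C₂ ≠ 0) :
    ∀ s : ℝ, Real.cos (C₂ * s) ≠ 0 → ∀ r : ℝ,
      Phi ((Real.tan (C₂ * s) : ℝ) : ℂ)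
          (-Complex.I * ((C₁ * s : ℝ) : ℂ) / ((4 * C₂ * Real.cos (C₂ * s) ^ 2 : ℝ) : ℂ)) r =
        (((r * Real.sin (2 * C₂ * s) : ℝ) : ℂ) -
            Complex.I * ((C₁ * s / (2 * C₂) : ℝ) : ℂ),
         r * Real.cos (2 * C₂ * s)) := by
  intro s hs r
  have h : Real.sin (C₂*s)^2 + Real.cos (C₂*s)^2 = 1 := Real.sin_sq_add_cos_sq _
  have h2 : (2:ℝ)*C₂*s = 2*(C₂*s) := by ring
  unfold Phi
  rw [Real.tan_eq_sin_div_cos, h2, Real.sin_two_mul, Real.cos_two_mul]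
  set c := Real.cos (C₂*s) with hcdef
  set si := Real.sin (C₂*s) with hsdef
  have hc : (c:ℂ) ≠ 0 := by exact_mod_cast hs
  have hC2 : (C₂:ℂ) ≠ 0 := by exact_mod_cast hC₂
  have hC : (si:ℂ)^2 + (c:ℂ)^2 = 1 := by exact_mod_cast h
  have hnC : (1:ℂ) + (si:ℂ)/c*((si:ℂ)/c) = 1/(c:ℂ)^2 := by
    field_simp
    linear_combination hC
  refine Prod.ext ?_ ?_
  · simp only [Complex.normSq_ofReal, map_div₀, map_mul, map_neg, Complex.conj_I,
      Complex.conj_ofReal]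
    push_cast
    rw [hnC]
    field_simp
    have hB : (4 * (C₂:ℂ) * (c:ℂ) ^ 2 * (4 * (C₂:ℂ) * (c:ℂ) ^ 2 * (c:ℂ) ^ 2)) ≠ 0 := by
      simp [hc, hC2]
    linear_combination (-4*Complex.I*(C₁:ℂ)*(s:ℂ))*hC
  · have h0 : ∀ a b x : ℝ, ((-I * (a:ℂ) / b) * (x:ℂ) + (I * (a:ℂ) / b) * x).re = 0 := by
      intro a b x
      rw [show (-I * (a:ℂ) / b) * x + (I * (a:ℂ)/b) * x = 0 by ring]
      simp
    have hn : (1:ℝ) + si/c*(si/c) = 1/c^2 := by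
      field_simp
      linear_combination h
    simp only [Complex.normSq_ofReal, map_div₀, map_mul, map_neg, Complex.conj_I,
      Complex.conj_ofReal, h0]
    rw [hn]
    field_simp
    simp only [neg_add_cancel, mul_zero, zero_div, Complex.zero_re]
    linear_combination (c^4*r*(c^2-1-si^2) + r*(c^4-1)*(si^2+1-c^2))*h
end

section
/- Let c₀ : ℂ → ℂ be an entire function. Then (1+|ξ|²)²·c₀''(ξ) − 2·conj(ξ)·(1+|ξ|²)·c₀'(ξ) + 2·conj(ξ)²·c₀(ξ) − 2·conj(c₀(ξ)) = 0 holds for all ξ ∈ ℂ if and only if there exist α ∈ ℂ and a ∈ ℝ such that c₀(ξ) = α + 2ai·ξ + conj(α)·ξ² for all ξ ∈ ℂ. -/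
open Complex ComplexConjugate Filter Topology

section KillingAux

private lemma hasDerivAt_conj_conj {f : ℂ → ℂ} {w d : ℂ} (hf : HasDerivAt f d (conj w)) :
    HasDerivAt (fun z => conj (f (conj z))) (conj d) w := by
  rw [hasDerivAt_iff_tendsto_slope] at hf ⊢
  have h1 : Tendsto (fun z : ℂ => (conj z : ℂ)) (𝓝[≠] w) (𝓝[≠] (conj w)) := by
    rw [tendsto_nhdsWithin_iff]
    constructor
    · exact (Complex.continuous_conj.tendsto w).mono_left nhdsWithin_le_nhds
    · filter_upwards [self_mem_nhdsWithin] with z hz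
      simpa using fun h => hz ((starRingEnd ℂ).injective h)
  have h2 : Tendsto (fun z : ℂ => (conj z : ℂ)) (𝓝 d) (𝓝 (conj d)) :=
    Complex.continuous_conj.tendsto d
  have := h2.comp (hf.comp h1)
  refine this.congr fun z => ?_
  simp only [Function.comp_apply, slope_def_field]
  simp [map_div₀, map_sub]

private lemma quad_hasDerivAt (A B C ξ : ℂ) :
    HasDerivAt (fun z : ℂ => A + B * z + C * z ^ 2) (B + 2 * C * ξ) ξ := by
  have h1 : HasDerivAt (fun z : ℂ => A + B * z) B ξ := by
    simpa using ((hasDerivAt_id ξ).const_mul B).const_add A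
  have h2 : HasDerivAt (fun z : ℂ => C * z ^ 2) (C * (2 * ξ)) ξ := by
    simpa using (hasDerivAt_pow 2 ξ).const_mul C
  have := h1.add h2
  exact this.congr_deriv (by ring)

private lemma quad_deriv (A B C : ℂ) :
    deriv (fun z : ℂ => A + B * z + C * z ^ 2) = fun ξ => B + 2 * C * ξ :=
  funext fun ξ => (quad_hasDerivAt A B C ξ).deriv

private lemma quad_deriv2 (A B C : ℂ) :
    deriv (deriv (fun z : ℂ => A + B * z + C * z ^ 2)) = fun _ => 2 * C := by
  rw [quad_deriv]
  funext ξ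
  have : HasDerivAt (fun z : ℂ => B + 2 * C * z) (2 * C) ξ := by
    simpa using ((hasDerivAt_id ξ).const_mul (2*C)).const_add B
  exact this.deriv

private def Pk (f f1 f2 g : ℂ → ℂ) (ξ ζ : ℂ) : ℂ :=
  (1 + ξ*ζ)^2 * f2 ξ - 2*ζ*(1+ξ*ζ)*f1 ξ + 2*ζ^2*f ξ - 2*g ζ

private lemma exp_I_ne_one {t : ℝ} (h0 : 0 < t) (h1 : t ≤ 1) :
    Complex.exp (Complex.I * t) ≠ 1 := by
  intro h
  rw [Complex.exp_eq_one_iff] at h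
  obtain ⟨n, hn⟩ := h
  have him := congrArg Complex.im hn
  simp [Complex.mul_im] at him
  have hπ := Real.pi_gt_three
  rcases le_or_gt (n:ℝ) 0 with hn0 | hn0
  · nlinarith
  · have hn1 : (1:ℝ) ≤ (n:ℝ) := by exact_mod_cast hn0
    nlinarith

private lemma seq_tendsto_punctured :
    Tendsto (fun n : ℕ => ((1/((n:ℝ)+1) : ℝ) : ℂ)) atTop (𝓝[≠] (0:ℂ)) := by
  rw [tendsto_nhdsWithin_iff]
  constructor
  · have h := tendsto_one_div_add_atTop_nhds_zero_nat (𝕜 := ℝ)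
    have h2 : Tendsto (fun n : ℕ => ((1/((n:ℝ)+1) : ℝ) : ℂ)) atTop (𝓝 ((0:ℝ):ℂ)) :=
      (Complex.continuous_ofReal.tendsto 0).comp h
    rw [Complex.ofReal_zero] at h2; exact h2
  · refine Eventually.of_forall fun n => ?_
    simp only [Set.mem_compl_iff, Set.mem_singleton_iff, Complex.ofReal_ne_zero]
    positivity

private lemma Pk_zero (f f1 f2 g : ℂ → ℂ)
    (hf : Differentiable ℂ f) (hf1 : Differentiable ℂ f1)
    (hf2 : Differentiable ℂ f2) (hg : Differentiable ℂ g)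
    (hdiag : ∀ ξ : ℂ, Pk f f1 f2 g ξ (conj ξ) = 0) :
    ∀ ξ ζ : ℂ, Pk f f1 f2 g ξ ζ = 0 := by
  have key1 : ∀ (s : ℝ) (z : ℂ),
      Pk f f1 f2 g (z * Complex.exp (Complex.I * s)) (z * conj (Complex.exp (Complex.I * s))) = 0 := by
    intro s
    set u : ℂ := Complex.exp (Complex.I * s) with hu_def
    have hφ : Differentiable ℂ (fun z : ℂ => Pk f f1 f2 g (z * u) (z * conj u)) := by
      unfold Pk
      fun_prop
    have hzero : ∀ t : ℝ, Pk f f1 f2 g ((t:ℂ) * u) ((t:ℂ) * conj u) = 0 := by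
      intro t
      have := hdiag ((t:ℂ) * u)
      rwa [map_mul, Complex.conj_ofReal] at this
    have hfreq : ∃ᶠ z in 𝓝[≠] (0:ℂ),
        (fun z : ℂ => Pk f f1 f2 g (z * u) (z * conj u)) z = (fun _ : ℂ => (0:ℂ)) z :=
      seq_tendsto_punctured.frequently (Frequently.of_forall fun n => hzero (1/((n:ℝ)+1)))
    have heq := AnalyticOnNhd.eq_of_frequently_eq
      (analyticOnNhd_univ_iff_differentiable.mpr hφ)
      (analyticOnNhd_univ_iff_differentiable.mpr (differentiable_const 0)) hfreq
    intro z
    exact congrFun heq z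
  have key2 : ∀ (w : ℂ) (t : ℝ), Pk f f1 f2 g w (w * Complex.exp (Complex.I * t)) = 0 := by
    intro w t
    have h := key1 (-t/2) (w * Complex.exp (-(Complex.I * ((-t/2 : ℝ) : ℂ))))
    have e1 : w * Complex.exp (-(Complex.I * ((-t/2 : ℝ) : ℂ))) * Complex.exp (Complex.I * ((-t/2 : ℝ) : ℂ)) = w := by
      rw [mul_assoc, ← Complex.exp_add]
      simp
    have e2 : w * Complex.exp (-(Complex.I * ((-t/2 : ℝ) : ℂ))) *
        conj (Complex.exp (Complex.I * ((-t/2 : ℝ) : ℂ))) = w * Complex.exp (Complex.I * t) := by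
      rw [← Complex.exp_conj]
      have hc : conj (Complex.I * ((-t/2 : ℝ) : ℂ)) = -(Complex.I * ((-t/2 : ℝ) : ℂ)) := by
        rw [map_mul, Complex.conj_I, Complex.conj_ofReal]
        ring
      rw [hc, mul_assoc, ← Complex.exp_add]
      congr 1
      push_cast
      ring
    rwa [e1, e2] at h
  have key3 : ∀ ξ : ℂ, ξ ≠ 0 → ∀ ζ : ℂ, Pk f f1 f2 g ξ ζ = 0 := by
    intro ξ hξ
    have hψ : Differentiable ℂ (fun ζ : ℂ => Pk f f1 f2 g ξ ζ) := by
      unfold Pk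
      fun_prop
    have hseq : Tendsto (fun n : ℕ => ξ * Complex.exp (Complex.I * ((1/((n:ℝ)+1) : ℝ) : ℂ)))
        atTop (𝓝[≠] ξ) := by
      rw [tendsto_nhdsWithin_iff]
      constructor
      · have hc : Continuous (fun z : ℂ => ξ * Complex.exp (Complex.I * z)) := by fun_prop
        have := (hc.tendsto 0).comp (seq_tendsto_punctured.mono_right nhdsWithin_le_nhds)
        simpa [Function.comp_def] using this
      · refine Eventually.of_forall fun n => ?_
        simp only [Set.mem_compl_iff, Set.mem_singleton_iff]
        intro hcon
        have h1 : Complex.exp (Complex.I * ((1/((n:ℝ)+1) : ℝ) : ℂ)) = 1 :=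
          mul_left_cancel₀ hξ (hcon.trans (mul_one ξ).symm)
        exact exp_I_ne_one (by positivity) (by
          rw [div_le_one (by positivity)]; linarith [Nat.cast_nonneg (α := ℝ) n]) h1
    have hfreq : ∃ᶠ ζ in 𝓝[≠] ξ,
        (fun ζ : ℂ => Pk f f1 f2 g ξ ζ) ζ = (fun _ : ℂ => (0:ℂ)) ζ :=
      hseq.frequently (Frequently.of_forall fun n => key2 ξ (1/((n:ℝ)+1)))
    have heq := AnalyticOnNhd.eq_of_frequently_eq
      (analyticOnNhd_univ_iff_differentiable.mpr hψ)
      (analyticOnNhd_univ_iff_differentiable.mpr (differentiable_const 0)) hfreq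
    intro ζ
    exact congrFun heq ζ
  intro ξ ζ
  rcases eq_or_ne ξ 0 with rfl | hξ
  · have hχ : Continuous (fun ξ : ℂ => Pk f f1 f2 g ξ ζ) := by
      unfold Pk
      have := hf.continuous; have := hf1.continuous; have := hf2.continuous
      fun_prop
    have := Continuous.ext_on (dense_compl_singleton (0:ℂ)) hχ continuous_const
      (fun x hx => key3 x hx ζ)
    exact congrFun this 0
  · exact key3 ξ hξ ζ

end KillingAux

theorem rotational_killing_fields (c₀ : ℂ → ℂ) (hc₀ : Differentiable ℂ c₀) :
    (∀ ξ : ℂ,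
      ((1 + normSq ξ : ℝ) : ℂ) ^ 2 * deriv (deriv c₀) ξ -
        2 * conj ξ * ((1 + normSq ξ : ℝ) : ℂ) * deriv c₀ ξ +
        2 * conj ξ ^ 2 * c₀ ξ - 2 * conj (c₀ ξ) = 0) ↔
    ∃ (α : ℂ) (a : ℝ), ∀ ξ : ℂ,
      c₀ ξ = α + 2 * (a : ℂ) * Complex.I * ξ + conj α * ξ ^ 2 := by
  constructor
  · intro hE
    set g : ℂ → ℂ := fun z => conj (c₀ (conj z)) with hg_def
    have haf : AnalyticOnNhd ℂ c₀ Set.univ := analyticOnNhd_univ_iff_differentiable.mpr hc₀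
    have hf1 : Differentiable ℂ (deriv c₀) := analyticOnNhd_univ_iff_differentiable.mp haf.deriv
    have hf2 : Differentiable ℂ (deriv (deriv c₀)) :=
      analyticOnNhd_univ_iff_differentiable.mp haf.deriv.deriv
    have hgd : Differentiable ℂ g := fun z =>
      (hasDerivAt_conj_conj ((hc₀ (conj z)).hasDerivAt)).differentiableAt
    have hdiag : ∀ ξ : ℂ, Pk c₀ (deriv c₀) (deriv (deriv c₀)) g ξ (conj ξ) = 0 := by
      intro ξ
      have h := hE ξ
      have hns : ((1 + normSq ξ : ℝ) : ℂ) = 1 + ξ * conj ξ := by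
        push_cast
        rw [Complex.mul_conj]
      rw [hns] at h
      unfold Pk
      rw [hg_def]
      simpa using h
    have hall := Pk_zero c₀ (deriv c₀) (deriv (deriv c₀)) g hc₀ hf1 hf2 hgd hdiag
    have hgval : ∀ ζ : ℂ, g ζ =
        deriv (deriv c₀) 0 / 2 - deriv c₀ 0 * ζ + c₀ 0 * ζ ^ 2 := by
      intro ζ
      have h := hall 0 ζ
      unfold Pk at h
      linear_combination (-1/2 : ℂ) * h
    have hgc : ∀ ξ : ℂ, conj (g (conj ξ)) = c₀ ξ := by
      intro ξ
      rw [hg_def]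
      simp
    have hfun : c₀ = fun z : ℂ => conj (deriv (deriv c₀) 0) / 2 +
        (-(conj (deriv c₀ 0))) * z + conj (c₀ 0) * z ^ 2 := by
      funext ξ
      rw [← hgc ξ, hgval (conj ξ)]
      simp only [map_sub, map_add, map_mul, map_div₀, map_pow, Complex.conj_conj, map_ofNat]
      ring
    set A : ℂ := conj (deriv (deriv c₀) 0) / 2 with hA
    set B : ℂ := -(conj (deriv c₀ 0)) with hB
    set C : ℂ := conj (c₀ 0) with hC
    have hf0 : c₀ 0 = A := by rw [hfun]; simp
    have hf10 : deriv c₀ 0 = B := by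
      rw [hfun, quad_deriv]; simp
    have hBB : B = -conj B := by nth_rewrite 1 [hB]; rw [hf10]
    have hCA : C = conj A := by nth_rewrite 1 [hC]; rw [hf0]
    have hBre : B.re = 0 := by
      have := congrArg Complex.re hBB
      simp at this
      linarith
    refine ⟨A, B.im / 2, fun ξ => ?_⟩
    have hBval : 2 * ((B.im / 2 : ℝ) : ℂ) * Complex.I = B := by
      apply Complex.ext
      · simp [hBre]
      · simp; ring
    rw [hfun]
    simp only []
    rw [hBval, ← hCA]
  · rintro ⟨α, a, h⟩
    have hfun : c₀ = fun z : ℂ => α + (2 * (a : ℂ) * Complex.I) * z + conj α * z ^ 2 := by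
      funext z; rw [h z]
    intro ξ
    rw [hfun, quad_deriv2, quad_deriv]
    simp only []
    have hns : ((1 + normSq ξ : ℝ) : ℂ) = 1 + ξ * conj ξ := by
      push_cast
      rw [Complex.mul_conj]
    rw [hns]
    simp only [map_add, map_mul, map_pow, Complex.conj_ofReal, Complex.conj_I,
      Complex.conj_conj, map_ofNat]
    ring
end

section
/- Let a ∈ ℂ and b ∈ ℝ, and define the translation map F : ℂ² → ℂ² by F(ξ,η) = (ξ, η + a + b·ξ − conj(a)·ξ²), whose differential at (ξ,η) sends a tangent vector (u,v) ∈ ℂ² to (u, v + (b − 2·conj(a)·ξ)·u). Then F is an isometry of the neutral Kähler metric: for all (ξ,η) ∈ ℂ² and all (u,v) ∈ ℂ², q_{F(ξ,η)}(u, v + (b − 2·conj(a)·ξ)·u) = q_{(ξ,η)}(u,v). -/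
open Complex ComplexConjugate

/-- the translation map `F(ξ,η) = (ξ, η + a + bξ − conj(a)ξ²)`,
with differential `(u,v) ↦ (u, v + (b − 2·conj(a)·ξ)·u)`, is an isometry of the
neutral Kähler metric. -/
theorem translation_is_isometry (a : ℂ) (b : ℝ) :
    ∀ (ξ η : ℂ) (u v : ℂ),
      q ξ (η + a + (b : ℂ) * ξ - conj a * ξ ^ 2) u (v + ((b : ℂ) - 2 * conj a * ξ) * u) =
        q ξ η u v := by
  intro ξ η u v
  have h : (1:ℝ) + normSq ξ ≠ 0 := by have := normSq_nonneg ξ; linarith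
  simp only [q]
  field_simp
  simp only [Complex.mul_im, Complex.mul_re, Complex.add_im, Complex.add_re,
    Complex.sub_im, Complex.sub_re, Complex.conj_re, Complex.conj_im,
    Complex.ofReal_re, Complex.ofReal_im, Complex.normSq_apply, pow_two,
    Complex.re_ofNat, Complex.im_ofNat]
  ring
end

section
/- Let α, β ∈ ℂ with |α|² + |β|² = 1. For (ξ,η) ∈ ℂ² with δ := −conj(β)·ξ + conj(α) ≠ 0, define the rotation map R(ξ,η) = ((αξ+β)/δ, η/δ²), whose differential at (ξ,η) sends a tangent vector (u,v) ∈ ℂ² to (u/δ², v/δ² + 2·conj(β)·η·u/δ³). Then R is an isometry of the neutral Kähler metric: for all such (ξ,η) and all (u,v) ∈ ℂ², q_{R(ξ,η)}(u/δ², v/δ² + 2·conj(β)·η·u/δ³) = q_{(ξ,η)}(u,v). -/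
open Complex ComplexConjugate

/-- the rotation map `R(ξ,η) = ((αξ+β)/δ, η/δ²)` with
`δ = −conj(β)ξ + conj(α)` and `|α|² + |β|² = 1`, with differential
`(u,v) ↦ (u/δ², v/δ² + 2·conj(β)·η·u/δ³)`, is an isometry of the
neutral Kähler metric. -/
theorem rotation_is_isometry (α β : ℂ) (hαβ : normSq α + normSq β = 1) :
    ∀ (ξ η : ℂ), ∀ δ : ℂ, δ = -conj β * ξ + conj α → δ ≠ 0 → ∀ u v : ℂ,
      q ((α * ξ + β) / δ) (η / δ ^ 2)
        (u / δ ^ 2) (v / δ ^ 2 + 2 * conj β * η * u / δ ^ 3) = q ξ η u v := by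
  intro ξ η δ hδ hδ0 u v
  have hδ' : conj δ ≠ 0 := by simpa using hδ0
  set D := normSq δ with hDdef
  have hDpos : 0 < D := normSq_pos.mpr hδ0
  have hD : D ≠ 0 := ne_of_gt hDpos
  set s := 1 + normSq ξ with hsdef
  have hs : 0 < s := by rw [hsdef]; have := normSq_nonneg ξ; linarith
  have hs' : s ≠ 0 := ne_of_gt hs
  have hDc : (D : ℂ) = δ * conj δ := (mul_conj δ).symm
  have h1 : 1 + normSq ((α * ξ + β) / δ) = s / D := by
    rw [normSq_div, eq_div_iff hD, add_mul, one_mul, div_mul_cancel₀ _ hD]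
    have expand : normSq (α * ξ + β) + D = (normSq α + normSq β) * s := by
      rw [hDdef, hsdef, hδ]
      simp only [normSq_apply, add_re, add_im, mul_re, mul_im, neg_re, neg_im,
        conj_re, conj_im, one_re, one_im]
      ring
    rw [hαβ, one_mul] at expand
    linarith
  have hu : normSq (u / δ ^ 2) = normSq u / D ^ 2 := by
    rw [normSq_div, map_pow]
  have hc1 : (v / δ ^ 2 + 2 * conj β * η * u / δ ^ 3) * conj (u / δ ^ 2)
      = (((D ^ 2)⁻¹ : ℝ) : ℂ) * (v * conj u)
        + (((2 * normSq u / D ^ 3 : ℝ)) : ℂ) * (conj β * η * conj δ) := by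
    rw [map_div₀, map_pow]
    push_cast
    rw [hDc, ← mul_conj u]
    field_simp
  have him1 : ((v / δ ^ 2 + 2 * conj β * η * u / δ ^ 3) * conj (u / δ ^ 2)).im
      = (v * conj u).im / D ^ 2 + 2 * normSq u / D ^ 3 * (conj β * η * conj δ).im := by
    rw [hc1, Complex.add_im, Complex.im_ofReal_mul, Complex.im_ofReal_mul]
    ring
  have hc2 : ((α * ξ + β) / δ) * conj (η / δ ^ 2)
      = (((D ^ 2)⁻¹ : ℝ) : ℂ) * ((α * ξ + β) * conj η * δ) := by
    rw [map_div₀, map_pow]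
    push_cast
    rw [hDc]
    field_simp
  have him2 : (((α * ξ + β) / δ) * conj (η / δ ^ 2)).im
      = (D ^ 2)⁻¹ * ((α * ξ + β) * conj η * δ).im := by
    rw [hc2, Complex.im_ofReal_mul]
  have hkey : s * (conj β * η * conj δ).im + ((α * ξ + β) * conj η * δ).im
      = D * (ξ * conj η).im := by
    rw [hsdef, hDdef, hδ]
    simp only [normSq_apply, map_add, map_mul, map_neg, conj_conj, add_re, add_im,
      mul_re, mul_im, neg_re, neg_im, conj_re, conj_im, one_re, one_im]
    ring
  have hm : (ξ * conj η).im
      = (s * (conj β * η * conj δ).im + ((α * ξ + β) * conj η * δ).im) / D := by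
    rw [eq_div_iff hD]; linarith [hkey]
  simp only [q]
  rw [h1, hu, him1, him2, hm]
  rw [← hsdef]
  field_simp
  ring
end

section
/- Let ρ, σ, a, b ∈ ℂ and c ∈ ℝ, and set λ = Im(ρ), A = c·((ρ−conj(ρ))·a·conj(b) + σ·a² − conj(σ)·conj(b)²), B = c·(ρ·(|a|²+|b|²) + 2·σ·a·b). Consider the real quadratic form q(x+iy) = Im(A·(x+iy)²) + Im(B)·(x²+y²) on ℝ². Then the determinant of q (i.e. of its symmetric matrix [[Im(A)+Im(B), Re(A)], [Re(A), Im(B)−Im(A)]]) equals (Im B)² − |A|² = c²·(λ² − |σ|²)·(|a|²−|b|²)². In particular, if c ≠ 0 and |a| ≠ |b|, the determinant is negative, zero, or positive exactly when λ² − |σ|² is negative, zero, or positive, so q is Lorentzian (indefinite nondegenerate), degenerate, or definite accordingly. -/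
open Complex ComplexConjugate Matrix

/-- the determinant of the induced metric
`q(x+iy) = Im(A·(x+iy)²) + Im(B)·(x²+y²)` on a line congruence, where
`A = c((ρ−conj ρ)a·conj(b) + σa² − conj(σ)conj(b)²)` and
`B = c(ρ(|a|²+|b|²) + 2σab)`, equals `(Im B)² − |A|²
= c²(λ²−|σ|²)(|a|²−|b|²)²` with `λ = Im ρ`; in particular, for `c ≠ 0` and
`|a| ≠ |b|` its sign is the sign of `λ² − |σ|²`. -/
theorem induced_metric_determinant (ρ σ a b : ℂ) (c : ℝ)
    (A B : ℂ)
    (hA : A = (c : ℂ) * ((ρ - conj ρ) * a * conj b + σ * a ^ 2 - conj σ * conj b ^ 2))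
    (hB : B = (c : ℂ) * (ρ * ((normSq a : ℝ) + (normSq b : ℝ)) + 2 * σ * a * b))
    (D : ℝ) (hD : D = (A.im + B.im) * (B.im - A.im) - A.re ^ 2) :
    (∀ x y : ℝ, (A * ((x : ℂ) + (y : ℂ) * Complex.I) ^ 2).im + B.im * (x ^ 2 + y ^ 2) =
      ![x, y] ⬝ᵥ (!![A.im + B.im, A.re; A.re, B.im - A.im]).mulVec ![x, y]) ∧
    D = B.im ^ 2 - ‖A‖ ^ 2 ∧
    D = c ^ 2 * (ρ.im ^ 2 - ‖σ‖ ^ 2) *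
      (‖a‖ ^ 2 - ‖b‖ ^ 2) ^ 2 ∧
    (c ≠ 0 → ‖a‖ ≠ ‖b‖ →
      ((D < 0 ↔ ρ.im ^ 2 - ‖σ‖ ^ 2 < 0) ∧
       (D = 0 ↔ ρ.im ^ 2 - ‖σ‖ ^ 2 = 0) ∧
       (0 < D ↔ 0 < ρ.im ^ 2 - ‖σ‖ ^ 2))) := by
  have h1 : ∀ x y : ℝ, (A * ((x : ℂ) + (y : ℂ) * Complex.I) ^ 2).im + B.im * (x ^ 2 + y ^ 2) =
      ![x, y] ⬝ᵥ (!![A.im + B.im, A.re; A.re, B.im - A.im]).mulVec ![x, y] := by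
    intro x y
    simp [Matrix.mulVec, dotProduct, Fin.sum_univ_succ, Complex.mul_im,
      Complex.add_re, Complex.add_im, Complex.mul_re, pow_two]
    ring
  have h2 : D = B.im ^ 2 - ‖A‖ ^ 2 := by
    rw [hD, Complex.sq_norm, Complex.normSq_apply]; ring
  have h3 : D = c ^ 2 * (ρ.im ^ 2 - ‖σ‖ ^ 2) *
      (‖a‖ ^ 2 - ‖b‖ ^ 2) ^ 2 := by
    have habs2 : ∀ z : ℂ, ‖z‖ ^ 2 = z.re ^ 2 + z.im ^ 2 := fun z => by
      rw [Complex.sq_norm, Complex.normSq_apply]; ring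
    rw [h2, hB, hA]
    simp only [habs2]
    simp only [pow_two, Complex.normSq_apply, Complex.mul_im, Complex.mul_re,
      Complex.add_re, Complex.add_im, Complex.sub_re, Complex.sub_im, Complex.conj_re,
      Complex.conj_im, Complex.ofReal_re, Complex.ofReal_im, Complex.re_ofNat,
      Complex.im_ofNat]
    ring
  refine ⟨h1, h2, h3, fun hc hab => ?_⟩
  set E := ρ.im ^ 2 - ‖σ‖ ^ 2 with hE
  set k := c ^ 2 * (‖a‖ ^ 2 - ‖b‖ ^ 2) ^ 2 with hk
  have hD' : D = E * k := by rw [h3]; ring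
  have hpos : 0 < k := by
    have hne : ‖a‖ ^ 2 - ‖b‖ ^ 2 ≠ 0 := by
      intro h
      apply hab
      have ha := norm_nonneg a
      have hb := norm_nonneg b
      nlinarith
    positivity
  rw [hD']
  refine ⟨⟨fun h => ?_, fun h => mul_neg_of_neg_of_pos h hpos⟩,
    ⟨fun h => ?_, fun h => by rw [h, zero_mul]⟩,
    ⟨fun h => ?_, fun h => mul_pos h hpos⟩⟩
  · nlinarith
  · rcases mul_eq_zero.mp h with h' | h'
    · exact h'
    · exact absurd h' (ne_of_gt hpos)
  · nlinarith
end

section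
/- Let ρ, σ, a, b ∈ ℂ and c ∈ ℝ with c ≠ 0, |a| ≠ |b|, and Im(ρ) = 0 (the twist-free, i.e. Lagrangian, case). Set A = c·((ρ−conj(ρ))·a·conj(b) + σ·a² − conj(σ)·conj(b)²), B = c·(ρ·(|a|²+|b|²) + 2·σ·a·b), and q(x+iy) = Im(A·(x+iy)²) + Im(B)·(x²+y²) on ℝ². If σ = 0 then q is identically zero (the metric is totally null); if σ ≠ 0 then q is nondegenerate and indefinite of signature (1,1) (the metric is Lorentzian). Hence the metric induced on a Lagrangian surface is either Lorentzian or totally null. -/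
open Complex ComplexConjugate

/-- in the Lagrangian (twist-free) case `Im ρ = 0`, the induced
metric `q(x+iy) = Im(A·(x+iy)²) + Im(B)·(x²+y²)` on a line congruence is
identically zero if the shear `σ` vanishes, and is nondegenerate indefinite of
signature `(1,1)` (Lorentzian) if `σ ≠ 0`. -/
theorem lagrangian_metric_lorentz_or_null (ρ σ a b : ℂ) (c : ℝ)
    (hc : c ≠ 0) (hab : ‖a‖ ≠ ‖b‖) (htwist : ρ.im = 0)
    (A B : ℂ)
    (hA : A = (c : ℂ) * ((ρ - conj ρ) * a * conj b + σ * a ^ 2 - conj σ * conj b ^ 2))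
    (hB : B = (c : ℂ) * (ρ * ((normSq a : ℝ) + (normSq b : ℝ)) + 2 * σ * a * b))
    (q : ℂ → ℝ) (hq : ∀ z : ℂ, q z = (A * z ^ 2).im + B.im * normSq z) :
    (σ = 0 → ∀ z : ℂ, q z = 0) ∧
    (σ ≠ 0 → ∃ L : (ℝ × ℝ) ≃ₗ[ℝ] ℂ, ∀ p : ℝ × ℝ, q (L p) = p.1 ^ 2 - p.2 ^ 2) := by
  -- Key identity: q z = c * Im (σ (a z + b z̄)²)
  have key : ∀ z : ℂ, q z = c * (σ * (a * z + b * conj z) ^ 2).im := by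
    intro z
    rw [hq, hA, hB]
    simp only [Complex.mul_im, Complex.mul_re, Complex.add_im, Complex.add_re,
      Complex.sub_im, Complex.sub_re, Complex.conj_re, Complex.conj_im,
      Complex.ofReal_re, Complex.ofReal_im, Complex.normSq_apply, pow_two,
      Complex.re_ofNat, Complex.im_ofNat, htwist]
    ring
  constructor
  · intro hσ z
    rw [key, hσ]
    simp
  · intro hσ
    -- setup of constants
    set θ := σ.arg with hθ
    set τ : ℂ := Complex.exp ((-θ/2 : ℝ) * I) with hτdef
    have hστ : σ * τ ^ 2 = (‖σ‖ : ℂ) := by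
      have hτ2 : τ ^ 2 = Complex.exp ((-θ : ℝ) * I) := by
        rw [hτdef, sq, ← Complex.exp_add]; congr 1; push_cast; ring
      rw [hτ2]
      conv_lhs => rw [← Complex.norm_mul_exp_arg_mul_I σ, ← hθ]
      rw [mul_assoc, ← Complex.exp_add]
      have : (θ : ℂ) * I + ((-θ : ℝ) : ℂ) * I = 0 := by push_cast; ring
      rw [this, Complex.exp_zero, mul_one]
    have habsσ : (0:ℝ) < ‖σ‖ := norm_pos_iff.mpr hσ
    have hcabs : (0:ℝ) < |c| := abs_pos.mpr hc
    set s : ℝ := Real.sqrt (2 * |c| * ‖σ‖) with hsdef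
    have hspos : 0 < s := by
      apply Real.sqrt_pos.mpr
      exact mul_pos (mul_pos two_pos hcabs) habsσ
    have hs2 : s ^ 2 = 2 * |c| * ‖σ‖ := by
      rw [hsdef, sq, Real.mul_self_sqrt]
      positivity
    set e : ℝ := if 0 ≤ c then 1 else -1 with hedef
    have hee : e * e = 1 := by rw [hedef]; split <;> norm_num
    have hce : c * e = |c| := by
      rw [hedef]
      split
      · rw [mul_one, _root_.abs_of_nonneg ‹_›]
      · rw [_root_.abs_of_neg (lt_of_not_ge ‹_›)]; ring
    set μ : ℂ := ((s⁻¹ : ℝ) : ℂ) * τ with hμdef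
    set κ : ℂ := (s : ℂ) * Complex.exp ((θ/2 : ℝ) * I) with hκdef
    have hκμ : κ * μ = 1 := by
      rw [hκdef, hμdef, hτdef, mul_mul_mul_comm, ← Complex.exp_add]
      have h1 : ((θ/2 : ℝ) : ℂ) * I + ((-θ/2 : ℝ) : ℂ) * I = 0 := by push_cast; ring
      rw [h1, Complex.exp_zero, mul_one, ← Complex.ofReal_mul,
        mul_inv_cancel₀ (ne_of_gt hspos), Complex.ofReal_one]
    set D : ℝ := normSq a - normSq b with hDdef
    have hD : (D : ℂ) ≠ 0 := by
      simp only [hDdef, Complex.ofReal_sub, ne_eq, sub_eq_zero]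
      intro h
      apply hab
      have h' : normSq a = normSq b := by exact_mod_cast h
      rw [Complex.norm_def, Complex.norm_def, h']
    have hDval : (D : ℂ) = ((normSq a : ℝ) : ℂ) - ((normSq b : ℝ) : ℂ) := by
      rw [hDdef]; push_cast; ring
    -- the maps
    set F : ℂ → ℂ := fun z => a * z + b * conj z with hFdef
    set G : ℂ → ℂ := fun w => (conj a * w - b * conj w) / (D : ℂ) with hGdef
    have hFG : ∀ w, a * G w + b * conj (G w) = w := by
      intro w
      simp only [hGdef]
      rw [map_div₀, map_sub, map_mul, map_mul, Complex.conj_conj, Complex.conj_conj,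
        Complex.conj_ofReal]
      field_simp
      rw [hDval]
      linear_combination w * Complex.mul_conj a - w * Complex.mul_conj b
    have hGF : ∀ z, G (a * z + b * conj z) = z := by
      intro z
      simp only [hGdef]
      rw [map_add, map_mul, map_mul, Complex.conj_conj]
      rw [div_eq_iff hD, hDval]
      linear_combination z * Complex.mul_conj a - z * Complex.mul_conj b
    have hGadd : ∀ x y, G (x + y) = G x + G y := by
      intro x y
      simp only [hGdef, map_add]
      ring
    have hGsmul : ∀ (r : ℝ) (x : ℂ), G ((r : ℂ) * x) = (r : ℂ) * G x := by
      intro r x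
      simp only [hGdef, map_mul, Complex.conj_ofReal]
      ring
    set X : ℝ × ℝ → ℂ := fun p => ((p.1 + p.2 : ℝ) : ℂ) + ((e * (p.1 - p.2) : ℝ) : ℂ) * I
      with hXdef
    set M : ℂ → ℝ × ℝ := fun z =>
      (((κ * F z).re + e * (κ * F z).im) / 2, ((κ * F z).re - e * (κ * F z).im) / 2) with hMdef
    refine ⟨⟨⟨⟨fun p => G (μ * X p), ?_⟩, ?_⟩, M, ?_, ?_⟩, ?_⟩
    · -- map_add
      intro p p'
      have hX : μ * X (p + p') = μ * X p + μ * X p' := by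
        simp only [hXdef, Prod.fst_add, Prod.snd_add]
        push_cast
        ring
      simp only [hX, hGadd]
    · -- map_smul
      intro r p
      have hX : μ * X (r • p) = (r : ℂ) * (μ * X p) := by
        simp only [hXdef, Prod.smul_fst, Prod.smul_snd, smul_eq_mul]
        push_cast
        ring
      simp only [hX, hGsmul]
      rfl
    · -- left inverse
      intro p
      show M (G (μ * X p)) = p
      have hF : F (G (μ * X p)) = μ * X p := by
        simp only [hFdef]
        exact hFG (μ * X p)
      simp only [hMdef, hF]
      have h1 : κ * (μ * X p) = X p := by rw [← mul_assoc, hκμ, one_mul]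
      rw [h1]
      have hre : (X p).re = p.1 + p.2 := by simp [hXdef]
      have him : (X p).im = e * (p.1 - p.2) := by simp [hXdef]
      rw [hre, him]
      have e1 : (p.1 + p.2 + e * (e * (p.1 - p.2))) / 2 = p.1 := by
        rw [← mul_assoc, hee]; ring
      have e2 : (p.1 + p.2 - e * (e * (p.1 - p.2))) / 2 = p.2 := by
        rw [← mul_assoc, hee]; ring
      rw [e1, e2]
    · -- right inverse
      intro z
      show G (μ * X (M z)) = z
      have hX : X (M z) = κ * F z := by
        simp only [hXdef, hMdef]
        have h1 : e * ((((κ * F z).re + e * (κ * F z).im) / 2) -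
            (((κ * F z).re - e * (κ * F z).im) / 2)) = (κ * F z).im := by
          have hh : (((κ * F z).re + e * (κ * F z).im) / 2) -
              (((κ * F z).re - e * (κ * F z).im) / 2) = e * (κ * F z).im := by ring
          rw [hh, ← mul_assoc, hee, one_mul]
        have h2 : (((κ * F z).re + e * (κ * F z).im) / 2 +
            (((κ * F z).re - e * (κ * F z).im) / 2) : ℝ) = (κ * F z).re := by ring
        rw [h1, h2, Complex.re_add_im]
      rw [hX, ← mul_assoc, mul_comm μ κ, hκμ, one_mul]
      have : F z = a * z + b * conj z := by simp [hFdef]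
      rw [this, hGF]
    · -- the metric computation
      intro p
      show q (G (μ * X p)) = p.1 ^ 2 - p.2 ^ 2
      rw [key, hFG]
      have h1 : σ * (μ * X p) ^ 2 = ((‖σ‖ / s ^ 2 : ℝ) : ℂ) * X p ^ 2 := by
        have hh : σ * (μ * X p) ^ 2 = (σ * τ ^ 2) * ((s⁻¹ : ℝ) : ℂ) ^ 2 * X p ^ 2 := by
          rw [hμdef]; ring
        rw [hh, hστ]
        push_cast
        have hs0 : (s : ℝ) ≠ 0 := ne_of_gt hspos
        field_simp
      rw [h1]
      have h2 : (((‖σ‖ / s ^ 2 : ℝ) : ℂ) * X p ^ 2).im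
          = (‖σ‖ / s ^ 2) * (X p ^ 2).im := by
        simp only [Complex.mul_im, Complex.ofReal_re, Complex.ofReal_im, zero_mul, add_zero]
      rw [h2]
      have h3 : (X p ^ 2).im = 2 * (p.1 + p.2) * (e * (p.1 - p.2)) := by
        simp only [hXdef, sq, Complex.mul_im, Complex.add_re, Complex.add_im,
          Complex.mul_re, Complex.ofReal_re, Complex.ofReal_im, Complex.I_re, Complex.I_im]
        ring
      rw [h3, hs2, ← hce]
      have hce0 : c * e ≠ 0 := by rw [hce]; exact abs_ne_zero.mpr hc
      have he0 : e ≠ 0 := fun h => hce0 (by rw [h, mul_zero])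
      field_simp
      ring
end

section
/- Let b ∈ ℝ and consider the holomorphic section ξ ↦ (ξ, −b·i·ξ) of the space of oriented lines (the line congruence generated by rotation of the unit sphere about the x³-axis). Then for every ξ ∈ ℂ and every u ∈ ℂ, the neutral Kähler metric evaluated on the tangent vector (u, −b·i·u) to this section satisfies q_{(ξ, −biξ)}(u, −b·i·u) = 4b·(1−|ξ|²)·|u|²/(1+|ξ|²)³. In particular the induced metric is positive definite for b > 0 on |ξ| < 1, and is totally null exactly on the equator |ξ| = 1. -/
open Complex ComplexConjugate

lemma q_formula (b : ℝ) (ξ u : ℂ) :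
    q ξ (-(b : ℂ) * Complex.I * ξ) u (-(b : ℂ) * Complex.I * u) =
      4 * b * (1 - normSq ξ) * normSq u / (1 + normSq ξ) ^ 3 := by
  have hpos : (0:ℝ) < 1 + normSq ξ := by
    have := Complex.normSq_nonneg ξ; linarith
  rw [q]
  simp only [map_mul, map_neg, Complex.conj_I, Complex.conj_ofReal]
  have h1 : (-(b:ℂ) * Complex.I * u * conj u).im = -b * normSq u := by
    have : -(b:ℂ) * Complex.I * u * conj u = -(b:ℂ) * Complex.I * (u * conj u) := by ring
    rw [this, Complex.mul_conj]
    simp [Complex.mul_im, Complex.ofReal_im, Complex.ofReal_re]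
  have h2 : (ξ * (-(b:ℂ) * -Complex.I * conj ξ)).im = b * normSq ξ := by
    have : ξ * (-(b:ℂ) * -Complex.I * conj ξ) = (b:ℂ) * Complex.I * (ξ * conj ξ) := by
      ring
    rw [this, Complex.mul_conj]
    simp [Complex.mul_im, Complex.ofReal_im, Complex.ofReal_re]
  rw [h1, h2]
  field_simp
  ring

/-- on the holomorphic section `ξ ↦ (ξ, −biξ)`, the induced metric is
`q = 4b(1−|ξ|²)|u|²/(1+|ξ|²)³`; in particular for `b > 0` it is positive definite
on `|ξ| < 1` and totally null exactly on the equator `|ξ| = 1`. -/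
theorem holomorphic_section_metric (b : ℝ) :
    (∀ (ξ u : ℂ),
      q ξ (-(b : ℂ) * Complex.I * ξ) u (-(b : ℂ) * Complex.I * u) =
        4 * b * (1 - normSq ξ) * normSq u / (1 + normSq ξ) ^ 3) ∧
    (0 < b → ∀ ξ : ℂ, ‖ξ‖ < 1 → ∀ u : ℂ, u ≠ 0 →
      0 < q ξ (-(b : ℂ) * Complex.I * ξ) u (-(b : ℂ) * Complex.I * u)) ∧
    (0 < b → ∀ ξ : ℂ,
      ((∀ u : ℂ, q ξ (-(b : ℂ) * Complex.I * ξ) u (-(b : ℂ) * Complex.I * u) = 0) ↔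
        ‖ξ‖ = 1)) := by
  refine ⟨q_formula b, ?_, ?_⟩
  · intro hb ξ hξ u hu
    rw [q_formula]
    have h1 : normSq ξ < 1 := by
      rw [← Complex.sq_norm]
      nlinarith [norm_nonneg ξ]
    have h2 : 0 < normSq u := Complex.normSq_pos.mpr hu
    have h3 : (0:ℝ) < 1 + normSq ξ := by
      have := Complex.normSq_nonneg ξ; linarith
    have hnum : 0 < 4 * b * (1 - normSq ξ) * normSq u := by
      have : (0:ℝ) < 1 - normSq ξ := by linarith
      positivity
    exact div_pos hnum (by positivity)
  · intro hb ξ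
    constructor
    · intro h
      have := h 1
      rw [q_formula] at this
      have h3 : (0:ℝ) < 1 + normSq ξ := by
        have := Complex.normSq_nonneg ξ; linarith
      have hnum : 4 * b * (1 - normSq ξ) * normSq (1:ℂ) = 0 := by
        field_simp at this
        simpa using this
      simp [Complex.normSq_one] at hnum
      have hn : normSq ξ = 1 := by
        rcases hnum with h|h
        · linarith
        · linarith
      rw [← Complex.sq_norm] at hn
      nlinarith [norm_nonneg ξ]
    · intro h u
      rw [q_formula, ← Complex.sq_norm, h]
      norm_num
end
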